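/- arXiv:2101.00441 — 6 statements merged into one kernel-verified Lean document; each statement's English description precedes it below -/
import Mathlib

section
/- It is impossible to pack n+1 pairwise non-overlapping axis-aligned unit cubes into an axis-aligned box of dimensions (1+ε) × (1+ε) × n, for any ε with 0 ≤ ε < 1 and any positive integer n. -/
/-- The closed axis-aligned unit cube with lower-back-left vertex `x`. -/
def unitCube (x : Fin 3 → ℝ) : Set (Fin 3 → ℝ) :=
  {p | ∀ k, x k ≤ p k ∧ p k ≤ x k + 1}

/-- The open interior of the unit cube at `x`. -/
def unitCubeInt (x : Fin 3 → ℝ) : Set (Fin 3 → ℝ) :=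
  {p | ∀ k, x k < p k ∧ p k < x k + 1}

/-- It is impossible to pack `n + 1` pairwise interior-disjoint axis-aligned
unit cubes into the box `[0,1+ε] × [0,1+ε] × [0,n]` for `0 ≤ ε < 1`, `n ≥ 1`. -/
theorem pigeon_hole_3d (n : ℕ) (hn : 0 < n) (ε : ℝ) (hε0 : 0 ≤ ε) (hε1 : ε < 1) :
    ¬ ∃ pos : Fin (n + 1) → (Fin 3 → ℝ),
      (∀ i, unitCube (pos i) ⊆ {p | (0 ≤ p 0 ∧ p 0 ≤ 1 + ε) ∧ (0 ≤ p 1 ∧ p 1 ≤ 1 + ε) ∧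
                                     (0 ≤ p 2 ∧ p 2 ≤ (n : ℝ))}) ∧
      (∀ i j, i ≠ j → Disjoint (unitCubeInt (pos i)) (unitCubeInt (pos j))) := by
  rintro ⟨pos, hsub, hdisj⟩
  -- lower corner bounds
  have hcor : ∀ i, (0 ≤ pos i 0 ∧ pos i 0 ≤ 1 + ε) ∧ (0 ≤ pos i 1 ∧ pos i 1 ≤ 1 + ε) ∧
      (0 ≤ pos i 2 ∧ pos i 2 ≤ (n : ℝ)) := fun i =>
    hsub i (fun k => by constructor <;> simp)
  have hcor2 : ∀ i, (0 ≤ pos i 0 + 1 ∧ pos i 0 + 1 ≤ 1 + ε) ∧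
      (0 ≤ pos i 1 + 1 ∧ pos i 1 + 1 ≤ 1 + ε) ∧
      (0 ≤ pos i 2 + 1 ∧ pos i 2 + 1 ≤ (n : ℝ)) := fun i =>
    hsub i (show (fun k => pos i k + 1) ∈ unitCube (pos i) from fun k => by
      constructor <;> simp)
  have hx0 : ∀ i, 0 ≤ pos i 0 := fun i => (hcor i).1.1
  have hx1 : ∀ i, pos i 0 ≤ ε := fun i => by linarith [(hcor2 i).1.2]
  have hy0 : ∀ i, 0 ≤ pos i 1 := fun i => (hcor i).2.1.1
  have hy1 : ∀ i, pos i 1 ≤ ε := fun i => by linarith [(hcor2 i).2.1.2]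
  have hz0 : ∀ i, 0 ≤ pos i 2 := fun i => (hcor i).2.2.1
  have hz1 : ∀ i, pos i 2 ≤ (n : ℝ) - 1 := fun i => by linarith [(hcor2 i).2.2.2]
  -- the vertical coordinates are pairwise 1 apart
  have hdist : ∀ i j, i ≠ j → 1 ≤ |pos i 2 - pos j 2| := by
    intro i j hij
    by_contra h
    push_neg at h
    rw [abs_lt] at h
    set p : Fin 3 → ℝ := fun k => (pos i k + pos j k + 1) / 2 with hp
    have hpi : p ∈ unitCubeInt (pos i) := by
      intro k
      fin_cases k
      · show pos i 0 < (pos i 0 + pos j 0 + 1) / 2 ∧ (pos i 0 + pos j 0 + 1) / 2 < pos i 0 + 1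
        constructor <;> linarith [hx0 i, hx0 j, hx1 i, hx1 j]
      · show pos i 1 < (pos i 1 + pos j 1 + 1) / 2 ∧ (pos i 1 + pos j 1 + 1) / 2 < pos i 1 + 1
        constructor <;> linarith [hy0 i, hy0 j, hy1 i, hy1 j]
      · show pos i 2 < (pos i 2 + pos j 2 + 1) / 2 ∧ (pos i 2 + pos j 2 + 1) / 2 < pos i 2 + 1
        constructor <;> linarith [h.1, h.2]
    have hpj : p ∈ unitCubeInt (pos j) := by
      intro k
      fin_cases k
      · show pos j 0 < (pos i 0 + pos j 0 + 1) / 2 ∧ (pos i 0 + pos j 0 + 1) / 2 < pos j 0 + 1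
        constructor <;> linarith [hx0 i, hx0 j, hx1 i, hx1 j]
      · show pos j 1 < (pos i 1 + pos j 1 + 1) / 2 ∧ (pos i 1 + pos j 1 + 1) / 2 < pos j 1 + 1
        constructor <;> linarith [hy0 i, hy0 j, hy1 i, hy1 j]
      · show pos j 2 < (pos i 2 + pos j 2 + 1) / 2 ∧ (pos i 2 + pos j 2 + 1) / 2 < pos j 2 + 1
        constructor <;> linarith [h.1, h.2]
    exact Set.disjoint_left.mp (hdisj i j hij) hpi hpj
  -- pigeonhole via floors
  have hfb : ∀ i, ⌊pos i 2⌋.toNat < n := by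
    intro i
    have h1 : (⌊pos i 2⌋ : ℝ) ≤ (n : ℝ) - 1 := le_trans (Int.floor_le _) (hz1 i)
    have h2 : ⌊pos i 2⌋ ≤ (n : ℤ) - 1 := by exact_mod_cast h1
    omega
  let f : Fin (n + 1) → Fin n := fun i => ⟨⌊pos i 2⌋.toNat, hfb i⟩
  have hinj : Function.Injective f := by
    intro i j hfij
    by_contra hij
    have h1 : 0 ≤ ⌊pos i 2⌋ := Int.floor_nonneg.mpr (hz0 i)
    have h2 : 0 ≤ ⌊pos j 2⌋ := Int.floor_nonneg.mpr (hz0 j)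
    have heq : ⌊pos i 2⌋.toNat = ⌊pos j 2⌋.toNat := congrArg Fin.val hfij
    have heq' : ⌊pos i 2⌋ = ⌊pos j 2⌋ := by omega
    have d1 : (⌊pos i 2⌋ : ℝ) ≤ pos i 2 := Int.floor_le _
    have d2 : pos i 2 < ⌊pos i 2⌋ + 1 := Int.lt_floor_add_one _
    have d3 : (⌊pos j 2⌋ : ℝ) ≤ pos j 2 := Int.floor_le _
    have d4 : pos j 2 < ⌊pos j 2⌋ + 1 := Int.lt_floor_add_one _
    have := hdist i j hij
    rw [le_abs] at this
    have heq'' : (⌊pos i 2⌋ : ℝ) = (⌊pos j 2⌋ : ℝ) := by exact_mod_cast heq'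
    rcases this with h | h <;> linarith
  have := Fintype.card_le_of_injective f hinj
  simp [Fintype.card_fin] at this
end

section
/- At most ⌊n⌋ axis-aligned unit cubes with pairwise disjoint interiors fit inside the box [0,1+ε]×[0,1+ε]×[0,n] when 0 ≤ ε < 1; equivalently, the maximum number of unit cubes packable into this box equals ⌊n⌋ for n a positive integer. -/
/-- A packing of `m` unit cubes into `[0,1+ε] × [0,1+ε] × [0,n]`. -/
def UnitCubePacking (n m : ℕ) (ε : ℝ) (pos : Fin m → (Fin 3 → ℝ)) : Prop :=
  (∀ i, unitCube (pos i) ⊆ {p | (0 ≤ p 0 ∧ p 0 ≤ 1 + ε) ∧ (0 ≤ p 1 ∧ p 1 ≤ 1 + ε) ∧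
                                 (0 ≤ p 2 ∧ p 2 ≤ (n : ℝ))}) ∧
  (∀ i j, i ≠ j → Disjoint (unitCubeInt (pos i)) (unitCubeInt (pos j)))

/-- Exactly `n` unit cubes is the maximum number packable into
`[0,1+ε] × [0,1+ε] × [0,n]` for `0 ≤ ε < 1` and `n` a positive integer. -/
theorem max_unit_cubes_in_tall_box (n : ℕ) (hn : 0 < n) (ε : ℝ) (hε0 : 0 ≤ ε) (hε1 : ε < 1) :
    (∃ pos : Fin n → (Fin 3 → ℝ), UnitCubePacking n n ε pos) ∧
    (∀ m : ℕ, ∀ pos : Fin m → (Fin 3 → ℝ), UnitCubePacking n m ε pos → m ≤ n) := by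
  constructor
  · refine ⟨fun i => ![0, 0, (i : ℝ)], ?_, ?_⟩
    · intro i p hp
      have h0 := hp 0
      have h1 := hp 1
      have h2 := hp 2
      simp only [Matrix.cons_val_zero, Matrix.cons_val_one, Matrix.head_cons,
        Matrix.cons_val_two, Matrix.tail_cons] at h0 h1 h2
      have hi : (i : ℝ) + 1 ≤ n := by
        have : (i : ℕ) + 1 ≤ n := i.isLt
        exact_mod_cast this
      refine ⟨⟨h0.1, h0.2.trans (by linarith)⟩, ⟨h1.1, h1.2.trans (by linarith)⟩,
        ⟨le_trans (by positivity) h2.1, h2.2.trans hi⟩⟩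
    · intro i j hij
      rw [Set.disjoint_left]
      intro p hi hj
      have h2i := hi 2
      have h2j := hj 2
      norm_num [unitCubeInt] at h2i h2j
      have : (i : ℝ) < (j : ℝ) + 1 := lt_trans h2i.1 h2j.2
      have : (j : ℝ) < (i : ℝ) + 1 := lt_trans h2j.1 h2i.2
      have hij1 : (i : ℕ) < (j : ℕ) + 1 := by exact_mod_cast ‹(i : ℝ) < (j : ℝ) + 1›
      have hij2 : (j : ℕ) < (i : ℕ) + 1 := by exact_mod_cast ‹(j : ℝ) < (i : ℝ) + 1›
      exact hij (Fin.ext (by omega))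
  · intro m pos hpack
    obtain ⟨hsub, hdisj⟩ := hpack
    -- bounds for coordinates
    have hcorner : ∀ i, pos i ∈ unitCube (pos i) := fun i k => ⟨le_refl _, by linarith⟩
    have hcorner' : ∀ i, (fun k => pos i k + 1) ∈ unitCube (pos i) := by
      intro i k
      constructor
      · show pos i k ≤ pos i k + 1; linarith
      · show pos i k + 1 ≤ pos i k + 1; linarith
    have hb : ∀ i, (0 ≤ pos i 0 ∧ pos i 0 ≤ ε) ∧ (0 ≤ pos i 1 ∧ pos i 1 ≤ ε) ∧
        (0 ≤ pos i 2 ∧ pos i 2 + 1 ≤ n) := by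
      intro i
      have h1 := hsub i (hcorner i)
      have h2 := hsub i (hcorner' i)
      simp only [Set.mem_setOf_eq] at h1 h2
      exact ⟨⟨h1.1.1, by linarith [h2.1.2]⟩, ⟨h1.2.1.1, by linarith [h2.2.1.2]⟩,
        ⟨h1.2.2.1, by linarith [h2.2.2.2]⟩⟩
    -- map each cube to the floor of its z-coordinate
    have hmem : ∀ i : Fin m, (⌊pos i 2⌋).toNat < n := by
      intro i
      have h := (hb i).2.2
      have h0 : (0:ℤ) ≤ ⌊pos i 2⌋ := Int.floor_nonneg.2 h.1
      have h1 : (⌊pos i 2⌋ : ℝ) ≤ pos i 2 := Int.floor_le _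
      have : (⌊pos i 2⌋ : ℝ) + 1 ≤ n := by linarith
      have : ⌊pos i 2⌋ + 1 ≤ (n : ℤ) := by exact_mod_cast this
      omega
    have hinj : Function.Injective (fun i : Fin m => (⟨(⌊pos i 2⌋).toNat, hmem i⟩ : Fin n)) := by
      intro i j hij
      by_contra hne
      have hfl : ⌊pos i 2⌋ = ⌊pos j 2⌋ := by
        have := Fin.mk.injEq _ _ _ _ ▸ hij
        have h1 : (⌊pos i 2⌋).toNat = (⌊pos j 2⌋).toNat := by
          simpa using congrArg Fin.val hij
        have hi0 : (0:ℤ) ≤ ⌊pos i 2⌋ := Int.floor_nonneg.2 (hb i).2.2.1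
        have hj0 : (0:ℤ) ≤ ⌊pos j 2⌋ := Int.floor_nonneg.2 (hb j).2.2.1
        omega
      -- the two cubes' interiors intersect: contradiction
      have hd := hdisj i j hne
      rw [Set.disjoint_left] at hd
      set p : Fin 3 → ℝ := fun k => (pos i k + pos j k + 1) / 2 with hp
      have key : ∀ k, |pos i k - pos j k| < 1 := by
        intro k
        fin_cases k
        · show |pos i 0 - pos j 0| < 1
          rw [abs_lt]
          constructor <;> linarith [(hb i).1.1, (hb i).1.2, (hb j).1.1, (hb j).1.2]
        · show |pos i 1 - pos j 1| < 1
          rw [abs_lt]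
          constructor <;> linarith [(hb i).2.1.1, (hb i).2.1.2, (hb j).2.1.1, (hb j).2.1.2]
        · show |pos i 2 - pos j 2| < 1
          have h1 : (⌊pos i 2⌋ : ℝ) ≤ pos i 2 := Int.floor_le _
          have h2 : pos i 2 < ⌊pos i 2⌋ + 1 := Int.lt_floor_add_one _
          have h3 : (⌊pos j 2⌋ : ℝ) ≤ pos j 2 := Int.floor_le _
          have h4 : pos j 2 < ⌊pos j 2⌋ + 1 := Int.lt_floor_add_one _
          rw [hfl] at h1 h2
          rw [abs_lt]; constructor <;> linarith
      have hpi : p ∈ unitCubeInt (pos i) := by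
        intro k
        have := abs_lt.1 (key k)
        constructor <;> (simp only [hp]; linarith [this.1, this.2])
      have hpj : p ∈ unitCubeInt (pos j) := by
        intro k
        have := abs_lt.1 (key k)
        constructor <;> (simp only [hp]; linarith [this.1, this.2])
      exact hd hpi hpj
    have := Fintype.card_le_of_injective _ hinj
    simpa using this
end

section
/- Suppose all box side lengths admissible along an axis of length D and D itself are positive integer multiples of a common divisor g. Then a packing of boxes into the container exists with some placement positions if and only if a packing exists in which, along that axis, every placement coordinate is an integer multiple of g obtained by scaling an integer-coordinate packing of the container of length D/g. In particular, scaling all lengths along one axis by 1/g gives a bijection between packings with coordinates in gℤ and packings of the scaled instance with coordinates in ℤ. -/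
/-- A 1-D packing: intervals `[x i, x i + a i] ⊆ [0, D]` with pairwise
disjoint interiors. -/
def Pack1D (m : ℕ) (D : ℝ) (a : Fin m → ℝ) (x : Fin m → ℝ) : Prop :=
  (∀ i, 0 ≤ x i ∧ x i + a i ≤ D) ∧
  (∀ i j, i ≠ j → x i + a i ≤ x j ∨ x j + a j ≤ x i)

open MeasureTheory Finset

/-- Total length of a packing is at most the container length. -/
lemma pack_sum_le (m : ℕ) (D : ℝ) (a x : Fin m → ℝ) (hD : 0 ≤ D)
    (h1 : ∀ i, 0 ≤ x i ∧ x i + a i ≤ D)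
    (h2 : ∀ i j, i ≠ j → x i + a i ≤ x j ∨ x j + a j ≤ x i)
    (hx0 : ∀ i, 0 ≤ a i) : ∑ i, a i ≤ D := by
  have hdisj : Pairwise (Function.onFun Disjoint
      (fun i => Set.Ioo (x i) (x i + a i))) := by
    intro i j hij
    rw [Function.onFun, Set.disjoint_left]
    rintro t ⟨h3, h4⟩ ⟨h5, h6⟩
    rcases h2 i j hij with h | h <;> linarith
  have hmeas := measure_iUnion (μ := volume) hdisj (fun i => measurableSet_Ioo)
  have hsub : (⋃ i, Set.Ioo (x i) (x i + a i)) ⊆ Set.Icc 0 D := by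
    rintro t ht
    simp only [Set.mem_iUnion, Set.mem_Ioo] at ht
    obtain ⟨i, h3, h4⟩ := ht
    have := h1 i
    exact ⟨by linarith [this.1], by linarith [this.2]⟩
  have hle := (measure_mono hsub).trans_eq Real.volume_Icc
  rw [hmeas, tsum_fintype] at hle
  simp only [Real.volume_Ioo, add_sub_cancel_left] at hle
  rw [← ENNReal.ofReal_sum_of_nonneg (fun i _ => hx0 i)] at hle
  have h0 : D - 0 = D := by ring
  rw [h0] at hle
  exact (ENNReal.ofReal_le_ofReal_iff hD).mp hle

/-- Scaling a packing by a positive factor `g`. -/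
lemma pack_scale (m : ℕ) (g D : ℝ) (a x : Fin m → ℝ) (hg : 0 < g)
    (h : Pack1D m D a x) :
    Pack1D m (g * D) (fun i => g * a i) (fun i => g * x i) := by
  obtain ⟨h1, h2⟩ := h
  constructor
  · intro i
    obtain ⟨p, q⟩ := h1 i
    constructor
    · positivity
    · simp only; nlinarith
  · intro i j hij
    rcases h2 i j hij with h | h
    · left; simp only; nlinarith
    · right; simp only; nlinarith

/-- GCD discretisation: if `g` divides `D` and every admissible length `a i`,
then a packing exists iff a packing exists whose coordinates are `g` times the
integer coordinates of a packing of the scaled instance of length `D / g`. -/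
theorem gcd_discretisation (m : ℕ) (D g : ℕ) (a : Fin m → ℕ)
    (hg : 0 < g) (hgD : g ∣ D) (hga : ∀ i, g ∣ a i) (ha : ∀ i, 0 < a i) :
    (∃ x : Fin m → ℝ, Pack1D m (D : ℝ) (fun i => (a i : ℝ)) x) ↔
    (∃ y : Fin m → ℤ,
        Pack1D m ((D / g : ℕ) : ℝ) (fun i => ((a i / g : ℕ) : ℝ)) (fun i => (y i : ℝ)) ∧
        Pack1D m (D : ℝ) (fun i => (a i : ℝ)) (fun i => (g : ℝ) * (y i : ℝ))) := by
  have hgR : (0:ℝ) < g := by exact_mod_cast hg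
  have hca : ∀ i, (g:ℝ) * ((a i / g : ℕ) : ℝ) = (a i : ℝ) := by
    intro i
    rw [mul_comm]
    exact_mod_cast congrArg (Nat.cast : ℕ → ℝ) (Nat.div_mul_cancel (hga i))
  have hcD : (g:ℝ) * ((D / g : ℕ) : ℝ) = (D : ℝ) := by
    rw [mul_comm]
    exact_mod_cast congrArg (Nat.cast : ℕ → ℝ) (Nat.div_mul_cancel hgD)
  constructor
  · rintro ⟨x, h1, h2⟩
    have hsum : ∑ i, (a i : ℝ) ≤ (D : ℝ) :=
      pack_sum_le m (D:ℝ) _ x (by positivity) h1 h2 (fun i => by positivity)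
    set b : Fin m → ℕ := fun i => a i / g with hb
    set Y : Fin m → ℕ := fun i => ∑ j ∈ univ.filter (· < i), b j with hY
    have hsumb : ∑ i, (b i : ℝ) ≤ ((D / g : ℕ) : ℝ) := by
      rw [← mul_le_mul_iff_right₀ hgR, hcD, mul_sum]
      simpa only [hb, hca] using hsum
    have hub : ∀ i, (Y i : ℝ) + (b i : ℝ) ≤ ((D / g : ℕ) : ℝ) := by
      intro i
      refine le_trans ?_ hsumb
      have he : Y i + b i = ∑ j ∈ insert i (univ.filter (· < i)), b j := by
        rw [sum_insert (by simp), add_comm]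
      have h := sum_le_sum_of_subset (f := b)
        (subset_univ (insert i (univ.filter (· < i))))
      rw [← he] at h
      exact_mod_cast h
    have hmono : ∀ i j : Fin m, i < j → (Y i : ℝ) + (b i : ℝ) ≤ (Y j : ℝ) := by
      intro i j hij
      have hss : insert i (univ.filter (· < i)) ⊆ univ.filter (· < j) := by
        intro k hk
        simp only [mem_insert, mem_filter, mem_univ, true_and] at hk ⊢
        rcases hk with rfl | hk
        · exact hij
        · exact hk.trans hij
      have h := sum_le_sum_of_subset (f := b) hss
      rw [sum_insert (by simp), add_comm] at h
      exact_mod_cast h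
    have hP : Pack1D m ((D / g : ℕ) : ℝ) (fun i => ((a i / g : ℕ) : ℝ))
        (fun i => ((Y i : ℤ) : ℝ)) := by
      constructor
      · intro i
        refine ⟨by positivity, ?_⟩
        push_cast
        exact hub i
      · intro i j hij
        rcases lt_or_gt_of_ne hij with h | h
        · left; push_cast; exact hmono i j h
        · right; push_cast; exact hmono j i h
    refine ⟨fun i => (Y i : ℤ), hP, ?_⟩
    have := pack_scale m (g:ℝ) _ _ _ hgR hP
    rw [hcD] at this
    convert this using 2 with i
    exact (hca i).symm
  · rintro ⟨y, _, h⟩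
    exact ⟨_, h⟩
end

section
/- If in a one-dimensional packing problem on [0, D] with integer box lengths every placement coordinate may be assumed integral, then every coordinate may further be assumed to lie in the set S of all subset-sums of the multiset of box lengths that are at most D minus the minimum box length; i.e., any integral packing can be transformed (by left-shifting boxes) into a packing where each box's left endpoint is a sum of lengths of boxes placed to its left. -/
/-- An integral 1-D packing: intervals `[x i, x i + a i] ⊆ [0, D]` with
pairwise disjoint interiors, integer coordinates and lengths. -/
def IntPack1D (m : ℕ) (D : ℤ) (a : Fin m → ℤ) (x : Fin m → ℤ) : Prop :=
  (∀ i, 0 ≤ x i ∧ x i + a i ≤ D) ∧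
  (∀ i j, i ≠ j → x i + a i ≤ x j ∨ x j + a j ≤ x i)

lemma sum_len_le (m : ℕ) (a x : Fin m → ℤ) (ha : ∀ i, 0 < a i)
    (hx0 : ∀ i, 0 ≤ x i)
    (hd : ∀ i j, i ≠ j → x i + a i ≤ x j ∨ x j + a j ≤ x i) :
    ∀ T : Finset (Fin m), ∀ c : ℤ, 0 ≤ c → (∀ j ∈ T, x j + a j ≤ c) →
      ∑ j ∈ T, a j ≤ c := by
  intro T
  induction T using Finset.strongInduction with
  | _ T ih =>
    intro c hc hT
    rcases T.eq_empty_or_nonempty with rfl | hne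
    · simpa using hc
    · obtain ⟨j0, hj0T, hj0max⟩ := T.exists_max_image x hne
      have hsub : T.erase j0 ⊂ T := Finset.erase_ssubset hj0T
      have hrest : ∀ j ∈ T.erase j0, x j + a j ≤ x j0 := by
        intro j hj
        have hjne : j ≠ j0 := Finset.ne_of_mem_erase hj
        have hjT : j ∈ T := Finset.mem_of_mem_erase hj
        rcases hd j j0 hjne with h | h
        · exact h
        · have := hj0max j hjT
          linarith [ha j0]
      have h1 : ∑ j ∈ T.erase j0, a j ≤ x j0 := ih _ hsub _ (hx0 j0) hrest
      have h2 : ∑ j ∈ T, a j = a j0 + ∑ j ∈ T.erase j0, a j :=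
        (Finset.add_sum_erase T a hj0T).symm
      have := hT j0 hj0T
      linarith

/-- Adaptive discretisation: any integral packing can be left-shifted into a
packing where each box's left endpoint is the sum of the lengths of a set of
boxes placed entirely to its left. -/
theorem leftJustified_discretisation (m : ℕ) (D : ℤ) (a : Fin m → ℤ)
    (ha : ∀ i, 0 < a i) (x : Fin m → ℤ) (hx : IntPack1D m D a x) :
    ∃ y : Fin m → ℤ, IntPack1D m D a y ∧ (∀ i, y i ≤ x i) ∧
      ∀ i, ∃ T : Finset (Fin m),
        (∀ j ∈ T, j ≠ i ∧ y j + a j ≤ y i) ∧ y i = ∑ j ∈ T, a j := by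
  obtain ⟨hbound, hd⟩ := hx
  set S : Fin m → Finset (Fin m) := fun i => Finset.univ.filter (fun j => x j < x i)
    with hS
  set y : Fin m → ℤ := fun i => ∑ j ∈ S i, a j with hy
  have hmemS : ∀ i j, j ∈ S i ↔ x j < x i := by
    intro i j; simp [hS]
  -- y i ≤ x i
  have hle : ∀ i, y i ≤ x i := by
    intro i
    apply sum_len_le m a x ha (fun j => (hbound j).1) hd _ _ (hbound i).1
    intro j hj
    have hjx : x j < x i := (hmemS i j).1 hj
    have hjne : j ≠ i := fun h => by rw [h] at hjx; exact lt_irrefl _ hjx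
    rcases hd j i hjne with h | h
    · exact h
    · linarith [ha i]
  -- key: if x j < x i then y j + a j ≤ y i
  have hstep : ∀ i j, x j < x i → y j + a j ≤ y i := by
    intro i j hji
    have hsub : insert j (S j) ⊆ S i := by
      intro k hk
      rcases Finset.mem_insert.1 hk with rfl | hk
      · exact (hmemS i k).2 hji
      · exact (hmemS i k).2 (lt_trans ((hmemS j k).1 hk) hji)
    have hjnot : j ∉ S j := by simp [hmemS]
    calc y j + a j = ∑ k ∈ insert j (S j), a k := by
          rw [Finset.sum_insert hjnot]; ring
      _ ≤ ∑ k ∈ S i, a k :=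
          Finset.sum_le_sum_of_subset_of_nonneg hsub
            (fun k _ _ => le_of_lt (ha k))
      _ = y i := rfl
  have hy0 : ∀ i, 0 ≤ y i :=
    fun i => Finset.sum_nonneg fun j _ => le_of_lt (ha j)
  have hinj : ∀ i j, i ≠ j → x i ≠ x j := by
    intro i j hij h
    rcases hd i j hij with hh | hh <;> rw [h] at * <;> linarith [ha i, ha j]
  refine ⟨y, ⟨fun i => ⟨hy0 i, ?_⟩, ?_⟩, hle, ?_⟩
  · linarith [hle i, (hbound i).2]
  · intro i j hij
    rcases lt_or_gt_of_ne (hinj i j hij) with h | h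
    · exact Or.inl (hstep j i h)
    · exact Or.inr (hstep i j h)
  · intro i
    refine ⟨S i, ?_, rfl⟩
    intro j hj
    have hjx : x j < x i := (hmemS i j).1 hj
    exact ⟨fun h => by rw [h] at hjx; exact lt_irrefl _ hjx, hstep i j hjx⟩
end

section
/- The optimal value of the space-indexed integer program (without rotations) equals the optimal value of the continuous container loading problem restricted to placements at discretised positions; moreover, when all box dimensions and container dimensions are integers and boxes cannot be rotated, every optimal continuous packing can be converted to an integer-coordinate packing of the same value, so the space-indexed IP with unit discretisation is an exact reformulation of the CLP. -/
def boxInt (x a : Fin 3 → ℝ) : Set (Fin 3 → ℝ) :=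
  {p | ∀ k, x k < p k ∧ p k < x k + a k}

/-- The subset `s` of boxes is packable with real-valued coordinates. -/
def RealPackable (n : ℕ) (len : Fin n → Fin 3 → ℕ) (D : Fin 3 → ℕ)
    (s : Finset (Fin n)) : Prop :=
  ∃ pos : Fin n → (Fin 3 → ℝ),
    (∀ i ∈ s, ∀ k, 0 ≤ pos i k ∧ pos i k + (len i k : ℝ) ≤ (D k : ℝ)) ∧
    (∀ i ∈ s, ∀ j ∈ s, i ≠ j →
      Disjoint (boxInt (pos i) (fun k => (len i k : ℝ)))
               (boxInt (pos j) (fun k => (len j k : ℝ))))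

/-- The subset `s` of boxes is packable with integer coordinates. -/
def IntPackable (n : ℕ) (len : Fin n → Fin 3 → ℕ) (D : Fin 3 → ℕ)
    (s : Finset (Fin n)) : Prop :=
  ∃ pos : Fin n → (Fin 3 → ℤ),
    (∀ i ∈ s, ∀ k, 0 ≤ pos i k ∧ pos i k + (len i k : ℤ) ≤ (D k : ℤ)) ∧
    (∀ i ∈ s, ∀ j ∈ s, i ≠ j →
      Disjoint (boxInt (fun k => ((pos i k : ℤ) : ℝ)) (fun k => (len i k : ℝ)))
               (boxInt (fun k => ((pos j k : ℤ) : ℝ)) (fun k => (len j k : ℝ))))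

/-- If two open boxes with positive side lengths are disjoint, they are
separated along some axis. -/
lemma sep_of_disjoint (x y a b : Fin 3 → ℝ) (ha : ∀ k, 0 < a k) (hb : ∀ k, 0 < b k)
    (hd : Disjoint (boxInt x a) (boxInt y b)) :
    ∃ k, x k + a k ≤ y k ∨ y k + b k ≤ x k := by
  by_contra h
  push_neg at h
  set p : Fin 3 → ℝ := fun k => (max (x k) (y k) + min (x k + a k) (y k + b k)) / 2 with hp
  have hlt : ∀ k, max (x k) (y k) < min (x k + a k) (y k + b k) := by
    intro k
    rcases h k with ⟨h1, h2⟩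
    simp only [max_lt_iff, lt_min_iff]
    exact ⟨⟨by linarith [ha k], h1⟩, ⟨h2, by linarith [hb k]⟩⟩
  have hp1 : p ∈ boxInt x a := by
    intro k
    have := hlt k
    constructor
    · have hx : x k ≤ max (x k) (y k) := le_max_left _ _
      simp only [hp]; linarith
    · have hx : min (x k + a k) (y k + b k) ≤ x k + a k := min_le_left _ _
      simp only [hp]; linarith
  have hp2 : p ∈ boxInt y b := by
    intro k
    have := hlt k
    constructor
    · have hx : y k ≤ max (x k) (y k) := le_max_right _ _
      simp only [hp]; linarith
    · have hx : min (x k + a k) (y k + b k) ≤ y k + b k := min_le_right _ _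
      simp only [hp]; linarith
  exact Set.disjoint_left.mp hd hp1 hp2

/-- Separation along an axis implies disjointness. -/
lemma disjoint_of_sep (x y a b : Fin 3 → ℝ)
    (h : ∃ k, x k + a k ≤ y k ∨ y k + b k ≤ x k) :
    Disjoint (boxInt x a) (boxInt y b) := by
  obtain ⟨k, hk⟩ := h
  rw [Set.disjoint_left]
  intro p hp1 hp2
  have h1 := hp1 k
  have h2 := hp2 k
  rcases hk with hk | hk <;> linarith [h1.1, h1.2, h2.1, h2.2]

/-- With integer box and container dimensions and no rotations, a subset of
boxes is continuously packable iff it is packable at integer coordinates;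
hence the space-indexed IP with unit discretisation is an exact reformulation
of the container loading problem (the achievable objective values coincide). -/
theorem space_indexed_exact (n : ℕ) (len : Fin n → Fin 3 → ℕ) (D : Fin 3 → ℕ)
    (hlen : ∀ i k, 0 < len i k) (w : Fin n → ℝ) :
    (∀ s : Finset (Fin n),
      RealPackable n len D s ↔ IntPackable n len D s) ∧
    {v : ℝ | ∃ s, RealPackable n len D s ∧ v = ∑ i ∈ s, w i} =
      {v : ℝ | ∃ s, IntPackable n len D s ∧ v = ∑ i ∈ s, w i} := by
  have main : ∀ s : Finset (Fin n), RealPackable n len D s ↔ IntPackable n len D s := by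
    intro s
    constructor
    · rintro ⟨pos, hbound, hdisj⟩
      refine ⟨fun i k => ⌊pos i k⌋, ?_, ?_⟩
      · intro i hi k
        obtain ⟨h0, hD⟩ := hbound i hi k
        constructor
        · exact Int.floor_nonneg.mpr h0
        · have : ⌊pos i k⌋ ≤ ⌊(D k : ℝ) - (len i k : ℝ)⌋ :=
            Int.floor_le_floor (by linarith)
          rw [show ((D k : ℝ) - (len i k : ℝ)) = (((D k : ℤ) - (len i k : ℤ) : ℤ) : ℝ) by
            push_cast; ring, Int.floor_intCast] at this
          linarith
      · intro i hi j hj hij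
        obtain ⟨k, hk⟩ := sep_of_disjoint (pos i) (pos j)
          (fun k => (len i k : ℝ)) (fun k => (len j k : ℝ))
          (fun k => by simpa using (Nat.cast_pos (α := ℝ)).mpr (hlen i k))
          (fun k => by simpa using (Nat.cast_pos (α := ℝ)).mpr (hlen j k))
          (hdisj i hi j hj hij)
        apply disjoint_of_sep
        refine ⟨k, ?_⟩
        rcases hk with hk | hk
        · left
          have h1 : ⌊pos i k⌋ ≤ ⌊pos j k - (len i k : ℝ)⌋ :=
            Int.floor_le_floor (by linarith)
          rw [show (pos j k - (len i k : ℝ)) = pos j k - ((len i k : ℤ) : ℝ) by push_cast; ring,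
            Int.floor_sub_intCast] at h1
          have h3 : ⌊pos i k⌋ + (len i k : ℤ) ≤ ⌊pos j k⌋ := by omega
          show ((⌊pos i k⌋ : ℤ) : ℝ) + (len i k : ℝ) ≤ ((⌊pos j k⌋ : ℤ) : ℝ)
          exact_mod_cast h3
        · right
          have h1 : ⌊pos j k⌋ ≤ ⌊pos i k - (len j k : ℝ)⌋ :=
            Int.floor_le_floor (by linarith)
          rw [show (pos i k - (len j k : ℝ)) = pos i k - ((len j k : ℤ) : ℝ) by push_cast; ring,
            Int.floor_sub_intCast] at h1
          have h3 : ⌊pos j k⌋ + (len j k : ℤ) ≤ ⌊pos i k⌋ := by omega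
          show ((⌊pos j k⌋ : ℤ) : ℝ) + (len j k : ℝ) ≤ ((⌊pos i k⌋ : ℤ) : ℝ)
          exact_mod_cast h3
    · rintro ⟨pos, hbound, hdisj⟩
      refine ⟨fun i k => ((pos i k : ℤ) : ℝ), ?_, ?_⟩
      · intro i hi k
        obtain ⟨h0, hD⟩ := hbound i hi k
        refine ⟨?_, ?_⟩
        · show (0:ℝ) ≤ ((pos i k : ℤ) : ℝ)
          exact_mod_cast h0
        · show ((pos i k : ℤ) : ℝ) + (len i k : ℝ) ≤ (D k : ℝ)
          exact_mod_cast hD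
      · intro i hi j hj hij
        exact hdisj i hi j hj hij
  refine ⟨main, ?_⟩
  ext v
  simp only [Set.mem_setOf_eq]
  constructor
  · rintro ⟨s, hs, hv⟩; exact ⟨s, (main s).mp hs, hv⟩
  · rintro ⟨s, hs, hv⟩; exact ⟨s, (main s).mpr hs, hv⟩
end

section
/- In any interior-disjoint axis-aligned packing, one can normalize so every box is 'anchored': each box either touches the container wall at coordinate 0 on an axis or touches the face of another box along that axis; this normalization does not decrease the set of packed boxes. -/
def PackingFeasible (m : ℕ) (D : Fin 3 → ℝ) (pos len : Fin m → (Fin 3 → ℝ)) : Prop :=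
  (∀ i k, 0 ≤ pos i k ∧ pos i k + len i k ≤ D k) ∧
  (∀ i j, i ≠ j → Disjoint (boxInt (pos i) (len i)) (boxInt (pos j) (len j)))

/-- Box `i` is anchored along axis `H`: it touches the wall at coordinate 0,
or it touches the upper face of another box whose projections on the other
two axes overlap its own. -/
def Anchored (m : ℕ) (pos len : Fin m → (Fin 3 → ℝ)) (i : Fin m) (H : Fin 3) : Prop :=
  pos i H = 0 ∨ ∃ j, j ≠ i ∧ pos j H + len j H = pos i H ∧
    ∀ k, k ≠ H → pos i k < pos j k + len j k ∧ pos j k < pos i k + len i k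

lemma boxInt_disjoint_iff (x a y b : Fin 3 → ℝ) (ha : ∀ k, 0 < a k) (hb : ∀ k, 0 < b k) :
    Disjoint (boxInt x a) (boxInt y b) ↔ ∃ k, x k + a k ≤ y k ∨ y k + b k ≤ x k := by
  constructor
  · intro h
    by_contra hc
    push_neg at hc
    set p : Fin 3 → ℝ := fun k => (max (x k) (y k) + min (x k + a k) (y k + b k)) / 2 with hp
    have hmem : ∀ k, (x k < p k ∧ p k < x k + a k) ∧ (y k < p k ∧ p k < y k + b k) := by
      intro k
      have h1 := (hc k).1
      have h2 := (hc k).2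
      have hxa := ha k
      have hyb := hb k
      have hMx := le_max_left (x k) (y k)
      have hMy := le_max_right (x k) (y k)
      have hmx := min_le_left (x k + a k) (y k + b k)
      have hmy := min_le_right (x k + a k) (y k + b k)
      have hM : max (x k) (y k) < min (x k + a k) (y k + b k) := by
        apply max_lt <;> apply lt_min <;> linarith
      refine ⟨⟨?_, ?_⟩, ?_, ?_⟩ <;> simp only [hp] <;> linarith
    exact (Set.not_disjoint_iff.mpr ⟨p, show p ∈ boxInt x a from fun k => (hmem k).1,
      show p ∈ boxInt y b from fun k => (hmem k).2⟩) h
  · rintro ⟨k, hk⟩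
    rw [Set.disjoint_left]
    intro p hp hq
    have h1 := hp k
    have h2 := hq k
    rcases hk with h | h <;> linarith [h1.1, h1.2, h2.1, h2.2]

/-- Normalization: every interior-disjoint packing can be transformed into a
packing of the same boxes (coordinates only decreased) in which every box is
anchored along every axis. -/
theorem packing_normalization (m : ℕ) (D : Fin 3 → ℝ) (hD : ∀ k, 0 < D k)
    (pos len : Fin m → (Fin 3 → ℝ)) (hlen : ∀ i k, 0 < len i k)
    (hfeas : PackingFeasible m D pos len) :
    ∃ pos' : Fin m → (Fin 3 → ℝ), PackingFeasible m D pos' len ∧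
      (∀ i k, pos' i k ≤ pos i k) ∧
      ∀ i H, Anchored m pos' len i H := by
  classical
  obtain ⟨hbound, hdisj⟩ := hfeas
  set K : Set (Fin m → Fin 3 → ℝ) :=
    {q | (∀ i k, 0 ≤ q i k ∧ q i k + len i k ≤ D k) ∧
         (∀ i j : Fin m, i ≠ j → ∃ k, q i k + len i k ≤ q j k ∨ q j k + len j k ≤ q i k) ∧
         (∀ i k, q i k ≤ pos i k)} with hKdef
  have hposK : pos ∈ K := by
    refine ⟨hbound, ?_, fun i k => le_refl _⟩
    intro i j hij
    exact (boxInt_disjoint_iff _ _ _ _ (hlen i) (hlen j)).mp (hdisj i j hij)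
  have happly : ∀ (i : Fin m) (k : Fin 3), Continuous fun q : Fin m → Fin 3 → ℝ => q i k :=
    fun i k => (continuous_apply k).comp (continuous_apply i)
  have hKclosed : IsClosed K := by
    have hKeq : K =
        (⋂ i, ⋂ k, {q : Fin m → Fin 3 → ℝ |
            0 ≤ q i k ∧ q i k + len i k ≤ D k ∧ q i k ≤ pos i k}) ∩
        (⋂ (p : Fin m × Fin m), ⋂ (_ : p.1 ≠ p.2),
          ⋃ k, ({q : Fin m → Fin 3 → ℝ | q p.1 k + len p.1 k ≤ q p.2 k} ∪
            {q : Fin m → Fin 3 → ℝ | q p.2 k + len p.2 k ≤ q p.1 k})) := by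
      ext q
      simp only [hKdef, Set.mem_setOf_eq, Set.mem_inter_iff, Set.mem_iInter, Set.mem_iUnion,
        Set.mem_union]
      constructor
      · rintro ⟨h1, h2, h3⟩
        exact ⟨fun i k => ⟨(h1 i k).1, (h1 i k).2, h3 i k⟩, fun p hp => h2 p.1 p.2 hp⟩
      · rintro ⟨h1, h2⟩
        exact ⟨fun i k => ⟨(h1 i k).1, (h1 i k).2.1⟩, fun i j hij => h2 (i, j) hij,
          fun i k => (h1 i k).2.2⟩
    rw [hKeq]
    apply IsClosed.inter
    · refine isClosed_iInter fun i => isClosed_iInter fun k => ?_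
      rw [Set.setOf_and, Set.setOf_and]
      exact (isClosed_le continuous_const (happly i k)).inter
        ((isClosed_le ((happly i k).add continuous_const) continuous_const).inter
          (isClosed_le (happly i k) continuous_const))
    · refine isClosed_iInter fun p => isClosed_iInter fun _ => ?_
      refine isClosed_iUnion_of_finite fun k => IsClosed.union ?_ ?_
      · exact isClosed_le ((happly p.1 k).add continuous_const) (happly p.2 k)
      · exact isClosed_le ((happly p.2 k).add continuous_const) (happly p.1 k)
  have hC : IsCompact (Set.univ.pi fun i : Fin m =>
      Set.univ.pi fun k : Fin 3 => Set.Icc (0:ℝ) (pos i k)) :=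
    isCompact_univ_pi fun i => isCompact_univ_pi fun k => isCompact_Icc
  have hKsub : K ⊆ Set.univ.pi fun i : Fin m =>
      Set.univ.pi fun k : Fin 3 => Set.Icc (0:ℝ) (pos i k) := by
    intro q hq
    obtain ⟨h1, _, h3⟩ := hq
    simp only [Set.mem_pi, Set.mem_univ, Set.mem_Icc, true_implies]
    exact fun i k => ⟨(h1 i k).1, h3 i k⟩
  have hKcomp : IsCompact K := hC.of_isClosed_subset hKclosed hKsub
  have hfc : Continuous fun q : Fin m → Fin 3 → ℝ => ∑ a, ∑ k, q a k :=
    continuous_finset_sum _ fun a _ => continuous_finset_sum _ fun k _ => happly a k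
  obtain ⟨q, hqK, hqmin⟩ := hKcomp.exists_isMinOn ⟨pos, hposK⟩ hfc.continuousOn
  obtain ⟨hq1, hq2, hq3⟩ := hqK
  have hqK' : q ∈ K := ⟨hq1, hq2, hq3⟩
  refine ⟨q, ⟨hq1, fun i j hij =>
    (boxInt_disjoint_iff _ _ _ _ (hlen i) (hlen j)).mpr (hq2 i j hij)⟩, hq3, ?_⟩
  intro i H
  by_contra hnA
  have hne0 : q i H ≠ 0 := fun h => hnA (Or.inl h)
  have hnotouch : ∀ j, j ≠ i →
      (∀ k, k ≠ H → q i k < q j k + len j k ∧ q j k < q i k + len i k) →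
      q j H + len j H ≠ q i H := fun j h1 h2 h3 => hnA (Or.inr ⟨j, h1, h3, h2⟩)
  have hipos : 0 < q i H := lt_of_le_of_ne (hq1 i H).1 (Ne.symm hne0)
  set F : Finset (Fin m) := Finset.univ.filter (fun j => j ≠ i ∧
    (∀ k, k ≠ H → q i k < q j k + len j k ∧ q j k < q i k + len i k) ∧
    q j H + len j H ≤ q i H) with hF
  set S : Finset ℝ := insert 0 (F.image fun j => q j H + len j H) with hS
  have hS0 : (0:ℝ) ∈ S := Finset.mem_insert_self _ _
  set s : ℝ := S.max' ⟨0, hS0⟩ with hs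
  have hs0 : 0 ≤ s := Finset.le_max' _ _ hS0
  have hslt : s < q i H := by
    rw [hs]; apply (Finset.max'_lt_iff _ _).mpr
    intro b hb
    rcases Finset.mem_insert.mp hb with rfl | hb
    · exact hipos
    · obtain ⟨j, hjF, rfl⟩ := Finset.mem_image.mp hb
      obtain ⟨hji, hjov, hjle⟩ := (Finset.mem_filter.mp hjF).2
      exact lt_of_le_of_ne hjle (hnotouch j hji hjov)
  have hsub' : ∀ j ∈ F, q j H + len j H ≤ s := by
    intro j hj
    exact Finset.le_max' S _ (by
      rw [hS]
      exact Finset.mem_insert_of_mem (Finset.mem_image_of_mem _ hj))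
  set q' : Fin m → Fin 3 → ℝ := Function.update q i (Function.update (q i) H s) with hq'def
  have hq'ii : q' i H = s := by simp [hq'def]
  have hq'ik : ∀ k, k ≠ H → q' i k = q i k := by
    intro k hk; simp [hq'def, Function.update_of_ne hk]
  have hq'j : ∀ j, j ≠ i → q' j = q j := fun j hj => Function.update_of_ne hj _ _
  have hq'le : ∀ j k, q' j k ≤ q j k := by
    intro j k
    by_cases hj : j = i
    · by_cases hk : k = H
      · rw [hj, hk, hq'ii]; exact hslt.le
      · rw [hj, hq'ik k hk]
    · rw [hq'j j hj]
  have hsep_i : ∀ b, b ≠ i → ∃ k, q' i k + len i k ≤ q' b k ∨ q' b k + len b k ≤ q' i k := by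
    intro b hb
    rw [hq'j b hb]
    by_cases hover : ∀ k, k ≠ H → q i k < q b k + len b k ∧ q b k < q i k + len i k
    · obtain ⟨k, hk⟩ := hq2 i b (Ne.symm hb)
      have hkH : k = H := by
        by_contra hkH
        obtain ⟨h1, h2⟩ := hover k hkH
        rcases hk with h | h <;> linarith
      rw [hkH] at hk
      refine ⟨H, ?_⟩
      rcases hk with h | h
      · left; rw [hq'ii]; linarith
      · right; rw [hq'ii]
        exact hsub' b (Finset.mem_filter.mpr ⟨Finset.mem_univ _, hb, hover, h⟩)
    · push_neg at hover
      obtain ⟨k, hkH, hk⟩ := hover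
      refine ⟨k, ?_⟩
      rw [hq'ik k hkH]
      by_cases hA : q i k < q b k + len b k
      · left; exact hk hA
      · right; linarith [le_of_not_gt hA]
  have hq'K : q' ∈ K := by
    refine ⟨?_, ?_, ?_⟩
    · intro j k
      by_cases hj : j = i
      · by_cases hk : k = H
        · rw [hj, hk, hq'ii]
          exact ⟨hs0, by linarith [(hq1 i H).2]⟩
        · rw [hj, hq'ik k hk]; exact hq1 i k
      · rw [hq'j j hj]; exact hq1 j k
    · intro a b hab
      by_cases ha : a = i
      · rw [ha]
        exact hsep_i b (fun h => hab (ha.trans h.symm))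
      · by_cases hb2 : b = i
        · rw [hb2]
          obtain ⟨k, hk⟩ := hsep_i a ha
          exact ⟨k, hk.symm⟩
        · rw [hq'j a ha, hq'j b hb2]; exact hq2 a b hab
    · intro j k; exact le_trans (hq'le j k) (hq3 j k)
  have hlt : (∑ a, ∑ k, q' a k) < ∑ a, ∑ k, q a k := by
    apply Finset.sum_lt_sum
    · intro a _; exact Finset.sum_le_sum fun k _ => hq'le a k
    · refine ⟨i, Finset.mem_univ _, ?_⟩
      apply Finset.sum_lt_sum
      · intro k _; exact hq'le i k
      · exact ⟨H, Finset.mem_univ _, by rw [hq'ii]; exact hslt⟩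
  exact absurd (hqmin hq'K) (not_le.mpr hlt)
end
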